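/- With the same setup, for all integers d ≥ 0 and all integers j: η_d·δ_{j−d} = η_j − η_{j−2d−1}, and ab·γ_d·ε_{j−d} = η_j − η_{j−2d}. -/

import Mathlib

theorem stmt_12 (a b : ℤ) (ha : 0 < a) (hb : 0 < b) (hab : a * b ≥ 4)
    (γ η : ℤ → ℤ)
    (hγ0 : γ 0 = 0) (hγ1 : γ 1 = 1) (hη0 : η 0 = 1) (hη1 : η 1 = a * b - 1)
    (hγ : ∀ j : ℤ, γ (j + 1) = (a * b - 2) * γ j - γ (j - 1))
    (hη : ∀ j : ℤ, η (j + 1) = (a * b - 2) * η j - η (j - 1)) :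
    ∀ d : ℤ, 0 ≤ d → ∀ j : ℤ,
      η d * (η (j - d) - η (j - d - 1)) = η j - η (j - 2 * d - 1) ∧
      a * b * γ d * (γ (j - d + 1) - γ (j - d)) = η j - η (j - 2 * d) := by
  have Rη : ∀ y x z : ℤ, x = y + 1 → z = y - 1 → η x = (a * b - 2) * η y - η z := by
    intro y x z hx hz; subst hx; subst hz; exact hη y
  have Rγ : ∀ y x z : ℤ, x = y + 1 → z = y - 1 → γ x = (a * b - 2) * γ y - γ z := by
    intro y x z hx hz; subst hx; subst hz; exact hγ y
  have hlinkP : ∀ j : ℤ, η j = γ (j + 1) + γ j ∧ η (j + 1) = γ (j + 1 + 1) + γ (j + 1) := by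
    intro j
    induction j using Int.induction_on with
    | zero =>
      have hγ2 : γ (0 + 1 + 1) = a * b - 2 := by
        have := Rγ 1 (0 + 1 + 1) 0 (by ring) (by ring)
        rw [hγ1, hγ0] at this; linarith
      constructor
      · rw [show (0:ℤ) + 1 = 1 from by ring, hη0, hγ1, hγ0]; ring
      · rw [show (0:ℤ) + 1 = 1 from by ring] at hγ2 ⊢
        rw [hη1, hγ2, hγ1]; ring
    | succ i ih =>
      obtain ⟨ih1, ih2⟩ := ih
      constructor
      · exact ih2
      · have eη : η ((i:ℤ) + 1 + 1) = (a * b - 2) * η ((i:ℤ) + 1) - η i :=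
          Rη ((i:ℤ) + 1) _ _ (by ring) (by ring)
        have eγ1 : γ ((i:ℤ) + 1 + 1 + 1) = (a * b - 2) * γ ((i:ℤ) + 1 + 1) - γ ((i:ℤ) + 1) :=
          Rγ ((i:ℤ) + 1 + 1) _ _ (by ring) (by ring)
        have eγ2 : γ ((i:ℤ) + 1 + 1) = (a * b - 2) * γ ((i:ℤ) + 1) - γ i :=
          Rγ ((i:ℤ) + 1) _ _ (by ring) (by ring)
        linear_combination eη + (a * b - 2) * ih2 - ih1 - eγ1 - eγ2
    | pred i ih =>
      obtain ⟨ih1, ih2⟩ := ih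
      rw [show (-(i:ℤ) - 1 + 1) = -(i:ℤ) from by ring]
      refine ⟨?_, ih1⟩
      have eη : η (-(i:ℤ) + 1) = (a * b - 2) * η (-(i:ℤ)) - η (-(i:ℤ) - 1) :=
        Rη (-(i:ℤ)) _ _ (by ring) (by ring)
      have eγ1 : γ (-(i:ℤ) + 1) = (a * b - 2) * γ (-(i:ℤ)) - γ (-(i:ℤ) - 1) :=
        Rγ (-(i:ℤ)) _ _ (by ring) (by ring)
      have eγ2 : γ (-(i:ℤ) + 1 + 1) = (a * b - 2) * γ (-(i:ℤ) + 1) - γ (-(i:ℤ)) :=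
        Rγ (-(i:ℤ) + 1) _ _ (by ring) (by ring)
      have ih2' : η (-(i:ℤ) + 1) = γ (-(i:ℤ) + 1 + 1) + γ (-(i:ℤ) + 1) := ih2
      linear_combination eη - ih2' + (a * b - 2) * ih1 - eγ2 - eγ1
  have hlink : ∀ j : ℤ, η j = γ (j + 1) + γ j := fun j => (hlinkP j).1
  have key : ∀ d : ℤ, 0 ≤ d →
      (∀ j : ℤ, η d * (η (j - d) - η (j - d - 1)) = η j - η (j - 2 * d - 1) ∧
        a * b * γ d * (γ (j - d + 1) - γ (j - d)) = η j - η (j - 2 * d)) ∧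
      (∀ j : ℤ, η (d + 1) * (η (j - (d + 1)) - η (j - (d + 1) - 1)) = η j - η (j - 2 * (d + 1) - 1) ∧
        a * b * γ (d + 1) * (γ (j - (d + 1) + 1) - γ (j - (d + 1))) = η j - η (j - 2 * (d + 1))) := by
    refine Int.le_induction ?_ ?_
    ·
      constructor
      · intro j
        constructor
        · rw [hη0, show j - 0 = j from by ring, show j - 2 * 0 - 1 = j - 1 from by ring]; ring
        · rw [hγ0, show j - 2 * 0 = j from by ring]; ring
      · intro j
        rw [show (0:ℤ) + 1 = 1 from by ring]
        constructor
        · rw [hη1, show j - 1 - 1 = j - 2 from by ring, show j - 2 * 1 - 1 = j - 3 from by ring]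
          have e1 : η j = (a * b - 2) * η (j - 1) - η (j - 2) := Rη (j - 1) _ _ (by ring) (by ring)
          have e2 : η (j - 1) = (a * b - 2) * η (j - 2) - η (j - 3) :=
            Rη (j - 2) _ _ (by ring) (by ring)
          linear_combination e2 - e1
        · rw [hγ1, show j - 1 + 1 = j from by ring, show j - 2 * 1 = j - 2 from by ring]
          have L1 : η j = γ (j + 1) + γ j := hlink j
          have L2 : η (j - 2) = γ (j - 1) + γ (j - 2) := by
            have := hlink (j - 2)
            rwa [show j - 2 + 1 = j - 1 from by ring] at this
          have e1 : γ (j + 1) = (a * b - 2) * γ j - γ (j - 1) := Rγ j _ _ (by ring) (by ring)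
          have e2 : γ j = (a * b - 2) * γ (j - 1) - γ (j - 2) := Rγ (j - 1) _ _ (by ring) (by ring)
          linear_combination -L1 + L2 - e1 + e2
    · intro d hd ih
      refine ⟨ih.2, ?_⟩
      intro j
      rw [show d + 1 + 1 = d + 2 from by ring,
          show j - (d + 2) = j - d - 2 from by ring,
          show j - d - 2 - 1 = j - d - 3 from by ring,
          show j - d - 2 + 1 = j - d - 1 from by ring,
          show j - 2 * (d + 2) - 1 = j - 2 * d - 5 from by ring,
          show j - 2 * (d + 2) = j - 2 * d - 4 from by ring]
      have h2 := (ih.2 (j - 1)).1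
      rw [show j - 1 - (d + 1) = j - d - 2 from by ring,
          show j - d - 2 - 1 = j - d - 3 from by ring,
          show j - 1 - 2 * (d + 1) - 1 = j - 2 * d - 4 from by ring] at h2
      have h3 := (ih.1 (j - 2)).1
      rw [show j - 2 - d = j - d - 2 from by ring,
          show j - d - 2 - 1 = j - d - 3 from by ring,
          show j - 2 - 2 * d - 1 = j - 2 * d - 3 from by ring] at h3
      have h2' := (ih.2 (j - 1)).2
      rw [show j - 1 - (d + 1) + 1 = j - d - 1 from by ring,
          show j - 1 - (d + 1) = j - d - 2 from by ring,
          show j - 1 - 2 * (d + 1) = j - 2 * d - 3 from by ring] at h2'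
      have h3' := (ih.1 (j - 2)).2
      rw [show j - 2 - d + 1 = j - d - 1 from by ring,
          show j - 2 - d = j - d - 2 from by ring,
          show j - 2 - 2 * d = j - 2 * d - 2 from by ring] at h3'
      have h1 : η (d + 2) = (a * b - 2) * η (d + 1) - η d := Rη (d + 1) _ _ (by ring) (by ring)
      have h1' : γ (d + 2) = (a * b - 2) * γ (d + 1) - γ d := Rγ (d + 1) _ _ (by ring) (by ring)
      have h4 : η j = (a * b - 2) * η (j - 1) - η (j - 2) := Rη (j - 1) _ _ (by ring) (by ring)
      have h5 : η (j - 2 * d - 3) = (a * b - 2) * η (j - 2 * d - 4) - η (j - 2 * d - 5) :=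
        Rη (j - 2 * d - 4) _ _ (by ring) (by ring)
      have h5' : η (j - 2 * d - 2) = (a * b - 2) * η (j - 2 * d - 3) - η (j - 2 * d - 4) :=
        Rη (j - 2 * d - 3) _ _ (by ring) (by ring)
      constructor
      · linear_combination (η (j - d - 2) - η (j - d - 3)) * h1 + (a * b - 2) * h2 - h3 - h4 + h5
      · linear_combination a * b * (γ (j - d - 1) - γ (j - d - 2)) * h1' + (a * b - 2) * h2' - h3' - h4 + h5'
  intro d hd j
  exact (key d hd).1 j
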